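/- Let A be a Poisson domain with fraction field Q and let deg be the valuation on A coming from a good w-filtration F of A (i.e., gr_F A is a domain and {F_i,F_j} ⊆ F_{i+j-w}). Define deg_Q(a b^{-1}) = deg(a) − deg(b) for a ∈ A, b ∈ A\{0}. Then deg_Q is a well-defined w-valuation on Q: for all u,v ∈ Q, deg_Q({u,v}) ≥ deg_Q(u) + deg_Q(v) − w. -/

import Mathlib

/-- A Poisson bracket on a commutative algebra `A` over `k`. -/
structure PoissonBracket (k A : Type*) [CommRing k] [CommRing A] [Algebra k A] where
  bracket : A → A → A
  add_left : ∀ a b c : A, bracket (a + b) c = bracket a c + bracket b c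
  smul_left : ∀ (r : k) (a b : A), bracket (r • a) b = r • bracket a b
  antisymm : ∀ a b : A, bracket a b = - bracket b a
  leibniz : ∀ a b c : A, bracket a (b * c) = bracket a b * c + bracket a c * b
  jacobi : ∀ a b c : A,
    bracket a (bracket b c) + bracket b (bracket c a) + bracket c (bracket a b) = 0

/-- let `A` be a Poisson domain with fraction field `Q` (here `Q`
is a Poisson field and `A ⊆ Q` a Poisson subalgebra of which `Q` is the
fraction field), and let `deg` be the valuation on `A` coming from a good
`w`-filtration `F` of `A` (i.e. `gr_F A` is a domain and
`{F i, F j} ⊆ F (i+j-w)`).  Then `deg_Q (a b⁻¹) = deg a − deg b` is a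
well-defined `w`-valuation on `Q`: there is a function `ν : Q → ℤ ∪ {∞}`
satisfying `ν (a/b) + deg b = deg a` for `a, b ∈ A`, `b ≠ 0`, which is a
valuation and satisfies `ν u + ν v ≤ ν {u,v} + w` for all `u, v ∈ Q`. -/
theorem stmt8 (k Q : Type*) [Field k] [Field Q] [Algebra k Q]
    (P : PoissonBracket k Q) (A : Subalgebra k Q)
    (hAbr : ∀ a ∈ A, ∀ b ∈ A, P.bracket a b ∈ A)
    (hfrac : ∀ x : Q, ∃ a ∈ A, ∃ b ∈ A, b ≠ 0 ∧ x = a / b)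
    (w : ℤ) (F : ℤ → Submodule k Q)
    (hFA : ∀ i : ℤ, F i ≤ A.toSubmodule)
    (hdesc : ∀ i : ℤ, F (i + 1) ≤ F i)
    (hone : (1 : Q) ∈ F 0) (hone' : (1 : Q) ∉ F 1)
    (hmul : ∀ (i j : ℤ) (a b : Q), a ∈ F i → b ∈ F j → a * b ∈ F (i + j))
    (hsep : ∀ a : Q, (∀ i : ℤ, a ∈ F i) → a = 0)
    (hexh : ∀ a ∈ A, ∃ i : ℤ, a ∈ F i)
    -- `gr_F A` is a domain (the filtration is good):
    (hdom : ∀ (i j : ℤ) (a b : Q), a ∈ F i → a ∉ F (i + 1) → b ∈ F j →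
      b ∉ F (j + 1) → a * b ∉ F (i + j + 1))
    -- the filtration is a `w`-filtration:
    (hw : ∀ (i j : ℤ) (a b : Q), a ∈ F i → b ∈ F j →
      P.bracket a b ∈ F (i + j - w))
    -- `deg` is the degree function of `F` on `A`:
    (deg : Q → WithTop ℤ) (hdeg0 : deg 0 = ⊤)
    (hdeg : ∀ a ∈ A, a ≠ 0 → ∀ i : ℤ,
      deg a = (i : WithTop ℤ) ↔ (a ∈ F i ∧ a ∉ F (i + 1))) :
    ∃ ν : Q → WithTop ℤ,
      -- `ν = deg_Q` is well defined by the quotient rule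
      (∀ a ∈ A, ∀ b ∈ A, b ≠ 0 → ν (a / b) + deg b = deg a) ∧
      -- `ν` is a valuation on `Q`
      (∀ x : Q, ν x = ⊤ ↔ x = 0) ∧
      (∀ c : k, c ≠ 0 → ν (algebraMap k Q c) = 0) ∧
      (∀ x y : Q, ν (x * y) = ν x + ν y) ∧
      (∀ x y : Q, min (ν x) (ν y) ≤ ν (x + y)) ∧
      -- and it is a `w`-valuation
      (∀ x y : Q, ν x + ν y ≤ ν (P.bracket x y) + (w : WithTop ℤ)) := by
  classical
  -- monotonicity of the filtration
  have hmono : ∀ i j : ℤ, i ≤ j → F j ≤ F i := by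
    intro i j hij
    exact Int.le_induction (motive := fun n _ => F n ≤ F i) le_rfl (fun n _ ih => (hdesc n).trans ih) j hij
  -- every nonzero element of A has a well-defined top filtration level
  have hmax : ∀ a : Q, a ∈ A → a ≠ 0 → ∃ i : ℤ, a ∈ F i ∧ a ∉ F (i + 1) := by
    intro a ha ha0
    by_contra h
    push_neg at h
    apply ha0
    apply hsep
    obtain ⟨i0, hi0⟩ := hexh a ha
    intro j
    rcases le_or_gt j i0 with hj | hj
    · exact hmono j i0 hj hi0
    · exact Int.le_induction (motive := fun n _ => a ∈ F n) hi0 (fun m _ ih => h m ih) j hj.le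
  have hdeg' : ∀ a : Q, a ∈ A → a ≠ 0 → ∀ i : ℤ, a ∈ F i → a ∉ F (i + 1) →
      deg a = (i : WithTop ℤ) := fun a ha h0 i h1 h2 => (hdeg a ha h0 i).mpr ⟨h1, h2⟩
  have hDgex : ∀ a : Q, ∃ i : ℤ, a ∈ A → a ≠ 0 →
      (deg a = (i : WithTop ℤ) ∧ a ∈ F i ∧ a ∉ F (i + 1)) := by
    intro a
    by_cases h : a ∈ A ∧ a ≠ 0
    · obtain ⟨i, h1, h2⟩ := hmax a h.1 h.2
      exact ⟨i, fun _ _ => ⟨hdeg' a h.1 h.2 i h1 h2, h1, h2⟩⟩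
    · exact ⟨0, fun h1 h2 => absurd ⟨h1, h2⟩ h⟩
  choose Dg hDg using hDgex
  have hDg_le : ∀ a : Q, a ∈ A → a ≠ 0 → ∀ i : ℤ, a ∈ F i → i ≤ Dg a := by
    intro a ha h0 i hi
    by_contra h
    push_neg at h
    exact (hDg a ha h0).2.2 (hmono _ i (by omega) hi)
  have hDg_mul : ∀ a : Q, a ∈ A → a ≠ 0 → ∀ b : Q, b ∈ A → b ≠ 0 →
      Dg (a * b) = Dg a + Dg b := by
    intro a ha ha0 b hb hb0
    obtain ⟨_, ha1, ha2⟩ := hDg a ha ha0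
    obtain ⟨_, hb1, hb2⟩ := hDg b hb hb0
    have hm : a * b ∈ F (Dg a + Dg b) := hmul _ _ _ _ ha1 hb1
    have hm2 : a * b ∉ F (Dg a + Dg b + 1) := hdom _ _ _ _ ha1 ha2 hb1 hb2
    have hd := hdeg' (a * b) (mul_mem ha hb) (mul_ne_zero ha0 hb0) _ hm hm2
    exact WithTop.coe_inj.mp
      (((hDg (a * b) (mul_mem ha hb) (mul_ne_zero ha0 hb0)).1).symm.trans hd)
  -- choose representatives
  choose num hnumA den hdenA hden0 hrep using hfrac
  have hnum0 : ∀ x : Q, x ≠ 0 → num x ≠ 0 := by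
    intro x hx h
    exact hx (by rw [hrep x, h, zero_div])
  set ν : Q → WithTop ℤ :=
    fun x => if x = 0 then ⊤ else ((Dg (num x) - Dg (den x) : ℤ) : WithTop ℤ) with hν
  have hν0 : ν 0 = ⊤ := by simp [hν]
  have hνspec : ∀ x : Q, x ≠ 0 → ∀ a : Q, a ∈ A → ∀ b : Q, b ∈ A → b ≠ 0 →
      x = a / b → ν x = ((Dg a - Dg b : ℤ) : WithTop ℤ) := by
    intro x hx a ha b hb hb0 hxab
    have ha0 : a ≠ 0 := by
      intro h; rw [h, zero_div] at hxab; exact hx hxab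
    have hcross : num x * b = a * den x := by
      have h := (hrep x).symm.trans hxab
      rw [div_eq_div_iff (hden0 x) hb0] at h
      exact h
    have h1 := hDg_mul _ (hnumA x) (hnum0 x hx) _ hb hb0
    have h2 := hDg_mul _ ha ha0 _ (hdenA x) (hden0 x)
    rw [hcross] at h1
    have heq : Dg (num x) - Dg (den x) = Dg a - Dg b := by omega
    simp only [hν, if_neg hx, heq]
  have hDg1 : Dg 1 = 0 := by
    have hone'' : (1 : Q) ∉ F (0 + 1) := by simpa using hone'
    have hd := hdeg' 1 (one_mem A) one_ne_zero 0 hone hone''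
    exact WithTop.coe_inj.mp (((hDg 1 (one_mem A) one_ne_zero).1).symm.trans hd)
  -- zero bracket lemmas
  have hbr0 : ∀ y : Q, P.bracket 0 y = 0 := by
    intro y
    have h := P.add_left 0 0 y
    rw [add_zero] at h
    linear_combination -h
  have hbr0' : ∀ x : Q, P.bracket x 0 = 0 := by
    intro x; rw [P.antisymm, hbr0, neg_zero]
  -- quotient rules for the bracket
  have hbq : ∀ u c e : Q, e ≠ 0 →
      P.bracket u (c / e) * e ^ 2 = P.bracket u c * e - P.bracket u e * c := by
    intro u c e he
    have hv : c / e * e = c := div_mul_cancel₀ c he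
    have h := P.leibniz u (c / e) e
    rw [hv] at h
    linear_combination -(e * h) - P.bracket u e * hv
  have hbq' : ∀ a b v : Q, b ≠ 0 →
      P.bracket (a / b) v * b ^ 2 = P.bracket a v * b - P.bracket b v * a := by
    intro a b v hb
    have h := hbq v a b hb
    rw [P.antisymm (a / b) v, P.antisymm a v, P.antisymm b v]
    linear_combination -h
  have hmain : ∀ x y : Q, x ≠ 0 → y ≠ 0 →
      P.bracket x y * (den x ^ 2 * den y ^ 2) =
        (P.bracket (num x) (num y) * den x - P.bracket (den x) (num y) * num x) * den y
        - (P.bracket (num x) (den y) * den x - P.bracket (den x) (den y) * num x) * num y := by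
    intro x y hx hy
    have h1 := hbq x (num y) (den y) (hden0 y)
    rw [← hrep y] at h1
    have h2 := hbq' (num x) (den x) (num y) (hden0 x)
    rw [← hrep x] at h2
    have h3 := hbq' (num x) (den x) (den y) (hden0 x)
    rw [← hrep x] at h3
    linear_combination (den x ^ 2) * h1 + den y * h2 - num y * h3
  have hFcast : ∀ {i j : ℤ}, i = j → ∀ {u : Q}, u ∈ F i → u ∈ F j := by
    rintro i j rfl u h; exact h
  refine ⟨ν, ?_, ?_, ?_, ?_, ?_, ?_⟩
  · -- quotient rule
    intro a ha b hb hb0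
    by_cases ha0 : a = 0
    · rw [ha0, zero_div, hν0, hdeg0, top_add]
    · have hx : a / b ≠ 0 := div_ne_zero ha0 hb0
      rw [hνspec _ hx a ha b hb hb0 rfl, (hDg a ha ha0).1, (hDg b hb hb0).1,
        ← WithTop.coe_add, sub_add_cancel]
  · -- ν x = ⊤ ↔ x = 0
    intro x
    by_cases hx : x = 0 <;> simp [hν, hx]
  · -- scalars
    intro c hc
    have hxA : algebraMap k Q c ∈ A := A.algebraMap_mem c
    have hx0 : algebraMap k Q c ≠ 0 := by
      intro h
      exact hc ((algebraMap k Q).injective (h.trans (map_zero _).symm))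
    have hxF0 : algebraMap k Q c ∈ F 0 := by
      rw [Algebra.algebraMap_eq_smul_one]
      exact (F 0).smul_mem c hone
    have hxF1 : algebraMap k Q c ∉ F (0 + 1) := by
      intro h
      apply hone'
      have h1 : (1 : ℤ) = 0 + 1 := by norm_num
      rw [h1]
      have := (F (0 + 1)).smul_mem c⁻¹ h
      rwa [Algebra.algebraMap_eq_smul_one, inv_smul_smul₀ hc] at this
    have hd := hdeg' _ hxA hx0 0 hxF0 hxF1
    have hDgx : Dg (algebraMap k Q c) = 0 :=
      WithTop.coe_inj.mp (((hDg _ hxA hx0).1).symm.trans hd)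
    rw [hνspec _ hx0 _ hxA 1 (one_mem A) one_ne_zero (div_one _).symm, hDgx, hDg1]
    norm_num
  · -- multiplicativity
    intro x y
    by_cases hx : x = 0
    · simp [hν, hx]
    by_cases hy : y = 0
    · simp [hν, hy]
    have hxy : x * y ≠ 0 := mul_ne_zero hx hy
    have key : x * y = (num x * num y) / (den x * den y) := by
      conv_lhs => rw [hrep x, hrep y]
      rw [div_mul_div_comm]
    rw [hνspec (x * y) hxy _ (mul_mem (hnumA x) (hnumA y)) _
        (mul_mem (hdenA x) (hdenA y)) (mul_ne_zero (hden0 x) (hden0 y)) key,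
      hνspec x hx _ (hnumA x) _ (hdenA x) (hden0 x) (hrep x),
      hνspec y hy _ (hnumA y) _ (hdenA y) (hden0 y) (hrep y),
      hDg_mul _ (hnumA x) (hnum0 x hx) _ (hnumA y) (hnum0 y hy),
      hDg_mul _ (hdenA x) (hden0 x) _ (hdenA y) (hden0 y),
      ← WithTop.coe_add]
    congr 1
    ring
  · -- ultrametric inequality
    intro x y
    by_cases hx : x = 0
    · rw [hx, zero_add]; exact min_le_right _ _
    by_cases hy : y = 0
    · rw [hy, add_zero]; exact min_le_left _ _
    by_cases hxy : x + y = 0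
    · have h : ν (x + y) = ⊤ := by simp [hν, hxy]
      rw [h]; exact le_top
    have key : x + y = (num x * den y + num y * den x) / (den x * den y) := by
      conv_lhs => rw [hrep x, hrep y]
      rw [div_add_div _ _ (hden0 x) (hden0 y), mul_comm (den x) (num y)]
    have hNA : num x * den y + num y * den x ∈ A :=
      add_mem (mul_mem (hnumA x) (hdenA y)) (mul_mem (hnumA y) (hdenA x))
    have hN0 : num x * den y + num y * den x ≠ 0 := by
      intro h; apply hxy; rw [key, h, zero_div]
    have h1 : num x * den y ∈ F (Dg (num x) + Dg (den y)) :=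
      hmul _ _ _ _ (hDg _ (hnumA x) (hnum0 x hx)).2.1 (hDg _ (hdenA y) (hden0 y)).2.1
    have h2 : num y * den x ∈ F (Dg (num y) + Dg (den x)) :=
      hmul _ _ _ _ (hDg _ (hnumA y) (hnum0 y hy)).2.1 (hDg _ (hdenA x) (hden0 x)).2.1
    have hm : num x * den y + num y * den x ∈
        F (min (Dg (num x) + Dg (den y)) (Dg (num y) + Dg (den x))) :=
      add_mem (hmono _ _ (min_le_left _ _) h1) (hmono _ _ (min_le_right _ _) h2)
    have hle := hDg_le _ hNA hN0 _ hm
    rw [hνspec _ hxy _ hNA _ (mul_mem (hdenA x) (hdenA y))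
        (mul_ne_zero (hden0 x) (hden0 y)) key,
      hνspec x hx _ (hnumA x) _ (hdenA x) (hden0 x) (hrep x),
      hνspec y hy _ (hnumA y) _ (hdenA y) (hden0 y) (hrep y),
      hDg_mul _ (hdenA x) (hden0 x) _ (hdenA y) (hden0 y),
      ← WithTop.coe_min]
    exact WithTop.coe_le_coe.mpr (by omega)
  · -- w-valuation property
    intro x y
    by_cases hx : x = 0
    · rw [hx, hbr0 y, hν0, top_add, top_add]
    by_cases hy : y = 0
    · rw [hy, hbr0' x, hν0, add_top, top_add]
    by_cases hbxy : P.bracket x y = 0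
    · rw [hbxy, hν0, top_add]; exact le_top
    have hM := hmain x y hx hy
    have hb2 : den x ^ 2 * den y ^ 2 ≠ 0 :=
      mul_ne_zero (pow_ne_zero 2 (hden0 x)) (pow_ne_zero 2 (hden0 y))
    set N : Q := (P.bracket (num x) (num y) * den x - P.bracket (den x) (num y) * num x) * den y
        - (P.bracket (num x) (den y) * den x - P.bracket (den x) (den y) * num x) * num y
      with hN
    have hkey : P.bracket x y = N / (den x ^ 2 * den y ^ 2) := by
      rw [eq_div_iff hb2]; exact hM
    have hNA : N ∈ A := by
      rw [hN]
      exact sub_mem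
        (mul_mem (sub_mem (mul_mem (hAbr _ (hnumA x) _ (hnumA y)) (hdenA x))
          (mul_mem (hAbr _ (hdenA x) _ (hnumA y)) (hnumA x))) (hdenA y))
        (mul_mem (sub_mem (mul_mem (hAbr _ (hnumA x) _ (hdenA y)) (hdenA x))
          (mul_mem (hAbr _ (hdenA x) _ (hdenA y)) (hnumA x))) (hnumA y))
    have hN0 : N ≠ 0 := by
      intro h; apply hbxy; rw [hkey, h, zero_div]
    -- filtration degrees of representatives
    have hFa := (hDg _ (hnumA x) (hnum0 x hx)).2.1
    have hFb := (hDg _ (hdenA x) (hden0 x)).2.1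
    have hFc := (hDg _ (hnumA y) (hnum0 y hy)).2.1
    have hFe := (hDg _ (hdenA y) (hden0 y)).2.1
    have m1 : P.bracket (num x) (num y) * (den x * den y) ∈
        F (Dg (num x) + Dg (den x) + Dg (num y) + Dg (den y) - w) :=
      hFcast (by ring) (hmul _ _ _ _ (hw _ _ _ _ hFa hFc) (hmul _ _ _ _ hFb hFe))
    have m2 : P.bracket (den x) (num y) * (num x * den y) ∈
        F (Dg (num x) + Dg (den x) + Dg (num y) + Dg (den y) - w) :=
      hFcast (by ring) (hmul _ _ _ _ (hw _ _ _ _ hFb hFc) (hmul _ _ _ _ hFa hFe))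
    have m3 : P.bracket (num x) (den y) * (den x * num y) ∈
        F (Dg (num x) + Dg (den x) + Dg (num y) + Dg (den y) - w) :=
      hFcast (by ring) (hmul _ _ _ _ (hw _ _ _ _ hFa hFe) (hmul _ _ _ _ hFb hFc))
    have m4 : P.bracket (den x) (den y) * (num x * num y) ∈
        F (Dg (num x) + Dg (den x) + Dg (num y) + Dg (den y) - w) :=
      hFcast (by ring) (hmul _ _ _ _ (hw _ _ _ _ hFb hFe) (hmul _ _ _ _ hFa hFc))
    have hNF : N ∈ F (Dg (num x) + Dg (den x) + Dg (num y) + Dg (den y) - w) := by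
      have hNeq : N = P.bracket (num x) (num y) * (den x * den y)
          - P.bracket (den x) (num y) * (num x * den y)
          - P.bracket (num x) (den y) * (den x * num y)
          + P.bracket (den x) (den y) * (num x * num y) := by
        rw [hN]; ring
      rw [hNeq]
      exact add_mem (sub_mem (sub_mem m1 m2) m3) m4
    have hle := hDg_le _ hNA hN0 _ hNF
    have hbb : den x ^ 2 * den y ^ 2 = den x * den x * (den y * den y) := by ring
    have hd2 : Dg (den x ^ 2 * den y ^ 2) =
        Dg (den x) + Dg (den x) + (Dg (den y) + Dg (den y)) := by
      rw [hbb, hDg_mul _ (mul_mem (hdenA x) (hdenA x)) (mul_ne_zero (hden0 x) (hden0 x)) _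
          (mul_mem (hdenA y) (hdenA y)) (mul_ne_zero (hden0 y) (hden0 y)),
        hDg_mul _ (hdenA x) (hden0 x) _ (hdenA x) (hden0 x),
        hDg_mul _ (hdenA y) (hden0 y) _ (hdenA y) (hden0 y)]
    rw [hνspec _ hbxy _ hNA _ (mul_mem (pow_mem (hdenA x) 2) (pow_mem (hdenA y) 2)) hb2 hkey,
      hνspec x hx _ (hnumA x) _ (hdenA x) (hden0 x) (hrep x),
      hνspec y hy _ (hnumA y) _ (hdenA y) (hden0 y) (hrep y),
      hd2, ← WithTop.coe_add, ← WithTop.coe_add]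
    exact WithTop.coe_le_coe.mpr (by omega)
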